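/- Fix α ∈ Λ. If C is a bounded linear operator on H_α satisfying C S_j = S_j C and C S_j* = S_j* C for all j = 1,…,d, then C = λ I for some λ ∈ ℂ; that is, the representation π_α is irreducible. -/

import Mathlib

open scoped BigOperators InnerProductSpace

namespace QCstar

variable {d : ℕ}

/-- `q(j,α)`: product of `q j a` over the prefix of `α` preceding the first
occurrence of `j` (the whole list if `j` does not occur in `α`). -/
def qOne (q : Fin d → Fin d → ℂ) (j : Fin d) (α : List (Fin d)) : ℂ :=
  ((α.takeWhile fun a => a ≠ j).map (q j)).prod

/-- `q(α,β)` for finite multiindices, defined by recursion on `α`. -/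
def qMul (q : Fin d → Fin d → ℂ) : List (Fin d) → List (Fin d) → ℂ
  | [], _ => 1
  | a :: α, β => qOne q a β * qMul q α (β.erase a)

/-- `s_α = s_{α₁} ⋯ s_{α_m}`. -/
def sWord {A : Type*} [Monoid A] (s : Fin d → A) (α : List (Fin d)) : A :=
  (α.map s).prod

/-- The shift on infinite multiindices. -/
def shift (β : ℕ → Fin d) : ℕ → Fin d := fun n => β (n + 1)

/-- The finite multiindex `(β₁,…,β_m)`. -/
def prefixList (β : ℕ → Fin d) (m : ℕ) : List (Fin d) :=
  List.ofFn fun i : Fin m => β i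

/-- `β ∼ α`: the tails agree up to a shift. -/
def equivTail (β α : ℕ → Fin d) : Prop := ∃ m n, shift^[m] β = shift^[n] α

/-- `q(α,β)` for infinite multiindices: the limit of `q` of the prefixes. -/
noncomputable def qInf (q : Fin d → Fin d → ℂ) (α β : ℕ → Fin d) : ℂ :=
  Filter.limUnder Filter.atTop fun m => qMul q (prefixList α m) (prefixList β m)

/-- `(j, β₁, β₂, …)`. -/
def consSeq (j : Fin d) (β : ℕ → Fin d) : ℕ → Fin d
  | 0 => j
  | n + 1 => β n

open Classical in
/-- `β ∖ j` for an infinite multiindex: remove the first occurrence of `j`. -/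
noncomputable def eraseInf (j : Fin d) (β : ℕ → Fin d) : ℕ → Fin d :=
  if h : ∃ n, β n = j then fun k => if k < Nat.find h then β k else β (k + 1) else β

open Classical in
/-- `q(j,β)` for an infinite multiindex containing `j`. -/
noncomputable def qOneInf (q : Fin d → Fin d → ℂ) (j : Fin d) (β : ℕ → Fin d) : ℂ :=
  if h : ∃ n, β n = j then ∏ k ∈ Finset.range (Nat.find h), q j (β k) else 0

/-- Entries of the Fock form. -/
noncomputable def fockEntry (q : Fin d → Fin d → ℂ) (α β : List (Fin d)) : ℂ :=
  if β.Perm α then qMul q β α else 0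

/-- The Fock sesquilinear form on the free complex vector space with basis the
finite multiindices (conjugate-linear in the first argument). -/
noncomputable def fockForm (q : Fin d → Fin d → ℂ) (x y : List (Fin d) →₀ ℂ) : ℂ :=
  ∑ α ∈ x.support, ∑ β ∈ y.support, (starRingEnd ℂ) (x α) * y β * fockEntry q α β

variable {H : Type*} [NormedAddCommGroup H] [InnerProductSpace ℂ H] [CompleteSpace H]

/-- `(H, e)` is a realization of the Hilbert space `H_α`: the vectors `e β`, `β ∼ α`,
have the prescribed inner products and their span is dense. -/
def IsRepSpace (q : Fin d → Fin d → ℂ) (α : ℕ → Fin d) (e : (ℕ → Fin d) → H) : Prop :=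
  (∀ β γ : ℕ → Fin d, equivTail β α → equivTail γ α → ⟪e β, e γ⟫_ℂ = qInf q γ β) ∧
  (Submodule.span ℂ (e '' {β | equivTail β α})).topologicalClosure = ⊤

/-- The operators `S j` act on the basis vectors of `H_α` as prescribed:
`S j e_β = e_{(j,β)}`, and the adjoint kills `e_β` if `j` does not occur in `β` and
sends `e_β` to `q(j,β) e_{β∖j}` otherwise. -/
def IsRepOps (q : Fin d → Fin d → ℂ) (α : ℕ → Fin d) (e : (ℕ → Fin d) → H)
    (S : Fin d → H →L[ℂ] H) : Prop :=
  (∀ (j : Fin d) (β : ℕ → Fin d), equivTail β α → S j (e β) = e (consSeq j β)) ∧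
  (∀ (j : Fin d) (β : ℕ → Fin d), equivTail β α → (¬∃ n, β n = j) →
    ContinuousLinearMap.adjoint (S j) (e β) = 0) ∧
  (∀ (j : Fin d) (β : ℕ → Fin d), equivTail β α → (∃ n, β n = j) →
    ContinuousLinearMap.adjoint (S j) (e β) = qOneInf q j β • e (eraseInf j β))

/-! ### Auxiliary lemmas for the irreducibility proof -/

section Irred

open Filter ContinuousLinearMap Topology

variable {d : ℕ}

lemma shift_iterate_apply : ∀ (n : ℕ) (β : ℕ → Fin d) (k : ℕ), shift^[n] β k = β (k + n)
  | 0, β, k => rfl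
  | n+1, β, k => by
    rw [Function.iterate_succ_apply, shift_iterate_apply n (shift β) k]
    rfl

lemma equivTail_refl (α : ℕ → Fin d) : equivTail α α := ⟨0, 0, rfl⟩

lemma equivTail_shift {β α : ℕ → Fin d} (h : equivTail β α) : equivTail (shift β) α := by
  obtain ⟨m, n, hmn⟩ := h
  refine ⟨m, n + 1, ?_⟩
  rw [← Function.iterate_succ_apply, Function.iterate_succ_apply', hmn,
    Function.iterate_succ_apply']

lemma equivTail_iterate {β α : ℕ → Fin d} (n : ℕ) (h : equivTail β α) :
    equivTail (shift^[n] β) α := by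
  induction n with
  | zero => exact h
  | succ n ih => rw [Function.iterate_succ_apply']; exact equivTail_shift ih

lemma equivTail_shift_self (α : ℕ → Fin d) (n : ℕ) : equivTail (shift^[n] α) α :=
  equivTail_iterate n (equivTail_refl α)

lemma shift_consSeq (j : Fin d) (β : ℕ → Fin d) : shift (consSeq j β) = β :=
  funext fun _ => rfl

lemma consSeq_head_shift (β : ℕ → Fin d) : consSeq (β 0) (shift β) = β :=
  funext fun n => by cases n <;> rfl

lemma equivTail_consSeq {β α : ℕ → Fin d} (j : Fin d) (h : equivTail β α) :
    equivTail (consSeq j β) α := by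
  obtain ⟨m, n, hmn⟩ := h
  exact ⟨m + 1, n, by rw [Function.iterate_succ_apply, shift_consSeq]; exact hmn⟩

lemma eraseInf_of_head {j : Fin d} {β : ℕ → Fin d} (h0 : β 0 = j) :
    eraseInf j β = shift β := by
  have hex : ∃ n, β n = j := ⟨0, h0⟩
  rw [eraseInf, dif_pos hex]
  funext k
  rw [if_neg]
  · rfl
  · exact Nat.not_lt.mpr (le_trans (Nat.find_le h0) (Nat.zero_le k))

lemma qOneInf_of_head (q : Fin d → Fin d → ℂ) {j : Fin d} {β : ℕ → Fin d} (h0 : β 0 = j) :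
    qOneInf q j β = 1 := by
  have hex : ∃ n, β n = j := ⟨0, h0⟩
  rw [qOneInf, dif_pos hex]
  have h0' : Nat.find hex = 0 := Nat.le_zero.mp (Nat.find_le h0)
  rw [h0', Finset.prod_range_zero]

lemma equivTail_eraseInf {β α : ℕ → Fin d} (j : Fin d) (h : equivTail β α) :
    equivTail (eraseInf j β) α := by
  classical
  by_cases hex : ∃ n, β n = j
  · obtain ⟨n0, hn0⟩ := hex
    have hex' : ∃ n, β n = j := ⟨n0, hn0⟩
    have hsh : shift^[n0] (eraseInf j β) = shift^[n0 + 1] β := by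
      funext k
      rw [shift_iterate_apply, shift_iterate_apply]
      have : eraseInf j β = fun k => if k < Nat.find hex' then β k else β (k + 1) := by
        rw [eraseInf, dif_pos hex']
      rw [this]
      have hnot : ¬ (k + n0 < Nat.find hex') :=
        Nat.not_lt.mpr (le_trans (Nat.find_le hn0) (Nat.le_add_left n0 k))
      simp only [hnot, if_false]
      rfl
    obtain ⟨m, n, hmn⟩ := equivTail_iterate (n0 + 1) h
    refine ⟨m + n0, n, ?_⟩
    rw [Function.iterate_add_apply, hsh]
    exact hmn
  · rw [eraseInf, dif_neg hex]; exact h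

lemma qOneInf_abs_le_one (q : Fin d → Fin d → ℂ)
    (hlt : ∀ i j : Fin d, i ≠ j → ‖q i j‖ < 1)
    (j : Fin d) (β : ℕ → Fin d) : ‖qOneInf q j β‖ ≤ 1 := by
  rw [qOneInf]
  split_ifs with hex
  · rw [norm_prod]
    refine Finset.prod_le_one (fun i _ => norm_nonneg _) (fun i hi => ?_)
    have hne : β i ≠ j := Nat.find_min hex (Finset.mem_range.mp hi)
    exact le_of_lt (hlt j (β i) (Ne.symm hne))
  · simp

lemma qOneInf_abs_le_rho (q : Fin d → Fin d → ℂ)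
    (hlt : ∀ i j : Fin d, i ≠ j → ‖q i j‖ < 1)
    (ρ : ℝ) (hρ0 : 0 ≤ ρ) (hρq : ∀ i j : Fin d, i ≠ j → ‖q i j‖ ≤ ρ)
    {j : Fin d} {β : ℕ → Fin d} (h0 : β 0 ≠ j) :
    ‖qOneInf q j β‖ ≤ ρ := by
  rw [qOneInf]
  split_ifs with hex
  · have hfind : Nat.find hex ≠ 0 := by
      intro h
      exact h0 (by simpa [h] using Nat.find_spec hex)
    obtain ⟨m, hm⟩ := Nat.exists_eq_succ_of_ne_zero hfind
    rw [hm, Finset.prod_range_succ', norm_mul, norm_prod]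
    have h1 : ‖q j (β 0)‖ ≤ ρ := hρq j (β 0) (Ne.symm h0)
    have h2 : (∏ k ∈ Finset.range m, ‖q j (β (k + 1))‖) ≤ 1 := by
      refine Finset.prod_le_one (fun i _ => norm_nonneg _) (fun i hi => ?_)
      have hlt' : i + 1 < Nat.find hex := by
        rw [hm]; exact Nat.succ_lt_succ (Finset.mem_range.mp hi)
      exact le_of_lt (hlt j (β (i + 1)) (Ne.symm (Nat.find_min hex hlt')))
    calc (∏ k ∈ Finset.range m, ‖q j (β (k + 1))‖) * ‖q j (β 0)‖
        ≤ 1 * ρ := mul_le_mul h2 h1 (norm_nonneg _) zero_le_one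
      _ = ρ := one_mul ρ
  · simpa using hρ0

lemma qMul_self (q : Fin d → Fin d → ℂ) : ∀ l : List (Fin d), qMul q l l = 1
  | [] => rfl
  | a :: l => by
    rw [qMul, List.erase_cons_head, qMul_self q l, mul_one]
    simp [qOne]

lemma qInf_self (q : Fin d → Fin d → ℂ) (β : ℕ → Fin d) : qInf q β β = 1 := by
  rw [qInf]
  have h : (fun m => qMul q (prefixList β m) (prefixList β m)) = fun _ => (1 : ℂ) :=
    funext fun m => qMul_self q _
  rw [h]
  exact Filter.Tendsto.limUnder_eq tendsto_const_nhds

variable {H : Type*} [NormedAddCommGroup H] [InnerProductSpace ℂ H] [CompleteSpace H]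
variable {q : Fin d → Fin d → ℂ} {α : ℕ → Fin d} {e : (ℕ → Fin d) → H} {S : Fin d → H →L[ℂ] H}

lemma inner_e_self (he : IsRepSpace q α e) {β : ℕ → Fin d} (hβ : equivTail β α) :
    ⟪e β, e β⟫_ℂ = 1 := by
  rw [he.1 β β hβ hβ, qInf_self]

lemma norm_e (he : IsRepSpace q α e) {β : ℕ → Fin d} (hβ : equivTail β α) : ‖e β‖ = 1 := by
  have h := inner_e_self he hβ
  have h3 : ‖e β‖ ^ 2 = 1 := by
    rw [← inner_self_eq_norm_sq (𝕜 := ℂ), h]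
    simp
  calc ‖e β‖ = Real.sqrt (‖e β‖ ^ 2) := (Real.sqrt_sq (norm_nonneg _)).symm
    _ = 1 := by rw [h3, Real.sqrt_one]

lemma prefixList_succ (β : ℕ → Fin d) (n : ℕ) :
    prefixList β (n + 1) = β 0 :: prefixList (shift β) n := by
  rw [prefixList, List.ofFn_succ]
  rfl

lemma prefixList_concat (β : ℕ → Fin d) (n : ℕ) :
    prefixList β (n + 1) = prefixList β n ++ [β n] := by
  rw [prefixList, List.ofFn_succ', List.concat_eq_append]
  rfl

lemma sWord_nil {A : Type*} [Monoid A] (s : Fin d → A) : sWord s ([] : List (Fin d)) = 1 := rfl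

lemma sWord_cons {A : Type*} [Monoid A] (s : Fin d → A) (a : Fin d) (w : List (Fin d)) :
    sWord s (a :: w) = s a * sWord s w := by
  rw [sWord, sWord, List.map_cons, List.prod_cons]

lemma sWord_append {A : Type*} [Monoid A] (s : Fin d → A) (w₁ w₂ : List (Fin d)) :
    sWord s (w₁ ++ w₂) = sWord s w₁ * sWord s w₂ := by
  rw [sWord, sWord, sWord, List.map_append, List.prod_append]

lemma equivTail_foldr {β : ℕ → Fin d} (hβ : equivTail β α) :
    ∀ w : List (Fin d), equivTail (List.foldr consSeq β w) α
  | [] => hβ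
  | a :: w => equivTail_consSeq a (equivTail_foldr hβ w)

lemma sWord_apply_e (hS : IsRepOps q α e S) {β : ℕ → Fin d} (hβ : equivTail β α) :
    ∀ w : List (Fin d), sWord S w (e β) = e (List.foldr consSeq β w)
  | [] => by rw [sWord_nil]; rfl
  | a :: w => by
    rw [sWord_cons, ContinuousLinearMap.mul_apply, sWord_apply_e hS hβ w,
      hS.1 a _ (equivTail_foldr hβ w)]
    rfl

lemma foldr_prefixList : ∀ (n : ℕ) (β : ℕ → Fin d),
    List.foldr consSeq (shift^[n] β) (prefixList β n) = β
  | 0, β => rfl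
  | n+1, β => by
    rw [prefixList_succ, List.foldr_cons, Function.iterate_succ_apply,
      foldr_prefixList n (shift β), consSeq_head_shift]

lemma sWord_prefix_e (hS : IsRepOps q α e S) {β : ℕ → Fin d} (hβ : equivTail β α) (n : ℕ) :
    sWord S (prefixList β n) (e (shift^[n] β)) = e β := by
  rw [sWord_apply_e hS (equivTail_iterate n hβ), foldr_prefixList]

lemma Sadj_head (hS : IsRepOps q α e S) {β : ℕ → Fin d} {j : Fin d}
    (hβ : equivTail β α) (h0 : β 0 = j) :
    ContinuousLinearMap.adjoint (S j) (e β) = e (shift β) := by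
  rw [hS.2.2 j β hβ ⟨0, h0⟩, qOneInf_of_head q h0, eraseInf_of_head h0, one_smul]

lemma sWord_prefix_split (S : Fin d → H →L[ℂ] H) (β : ℕ → Fin d) (n : ℕ) :
    sWord S (prefixList β (n + 1)) = (sWord S (prefixList β n)).comp (S (β n)) := by
  rw [prefixList_concat, sWord_append, sWord_cons, sWord_nil, mul_one,
    ContinuousLinearMap.mul_def]

lemma Wadj_prefix (hS : IsRepOps q α e S) :
    ∀ n : ℕ, ContinuousLinearMap.adjoint (sWord S (prefixList α n)) (e α) = e (shift^[n] α)
  | 0 => by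
    show ContinuousLinearMap.adjoint (sWord S (prefixList α 0)) (e α) = e α
    rw [prefixList, List.ofFn_zero, sWord_nil, ContinuousLinearMap.one_def,
      ContinuousLinearMap.adjoint_id]
    rfl
  | n+1 => by
    rw [sWord_prefix_split, ContinuousLinearMap.adjoint_comp, ContinuousLinearMap.comp_apply,
      Wadj_prefix hS n, Function.iterate_succ_apply']
    exact Sadj_head hS (equivTail_shift_self α n)
      (by rw [shift_iterate_apply]; rw [Nat.zero_add])

lemma comm_sWord_apply {C : H →L[ℂ] H} (hC : ∀ j : Fin d, C ∘L S j = S j ∘L C) :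
    ∀ (w : List (Fin d)) (x : H), C (sWord S w x) = sWord S w (C x)
  | [], x => rfl
  | a :: w, x => by
    rw [sWord_cons, ContinuousLinearMap.mul_apply, ContinuousLinearMap.mul_apply]
    have h1 : C (S a (sWord S w x)) = S a (C (sWord S w x)) :=
      congrFun (congrArg (fun (T : H →L[ℂ] H) => (T : H → H)) (hC a)) (sWord S w x)
    rw [h1, comm_sWord_apply hC w x]

lemma commAdj_sWord_apply {C : H →L[ℂ] H}
    (hC' : ∀ j : Fin d, C ∘L ContinuousLinearMap.adjoint (S j)
      = ContinuousLinearMap.adjoint (S j) ∘L C) :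
    ∀ (w : List (Fin d)) (x : H),
      C (ContinuousLinearMap.adjoint (sWord S w) x)
        = ContinuousLinearMap.adjoint (sWord S w) (C x)
  | [], x => by
    rw [sWord_nil, ContinuousLinearMap.one_def, ContinuousLinearMap.adjoint_id]
    rfl
  | a :: w, x => by
    rw [sWord_cons, ContinuousLinearMap.mul_def, ContinuousLinearMap.adjoint_comp,
      ContinuousLinearMap.comp_apply, ContinuousLinearMap.comp_apply]
    have h1 : C (ContinuousLinearMap.adjoint (S a) x)
        = ContinuousLinearMap.adjoint (S a) (C x) :=
      congrFun (congrArg (fun (T : H →L[ℂ] H) => (T : H → H)) (hC' a)) x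
    rw [commAdj_sWord_apply hC' w, h1]

lemma dense_span_e (he : IsRepSpace q α e) :
    Dense (Submodule.span ℂ (e '' {β | equivTail β α}) : Set H) := by
  rw [dense_iff_closure_eq, ← Submodule.topologicalClosure_coe, he.2]
  rfl

lemma orth_dense (he : IsRepSpace q α e) (v : H)
    (h : ∀ γ : ℕ → Fin d, equivTail γ α → ⟪e γ, v⟫_ℂ = 0) : v = 0 := by
  have hall : ∀ u : H, ⟪u, v⟫_ℂ = 0 := by
    intro u
    have hsub : (Submodule.span ℂ (e '' {β | equivTail β α}) : Set H)
        ⊆ {u : H | ⟪u, v⟫_ℂ = 0} := by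
      intro u hu
      induction hu using Submodule.span_induction with
      | mem x hx => obtain ⟨γ, hγ, rfl⟩ := hx; exact h γ hγ
      | zero => simp
      | add x y hx hy ihx ihy =>
        show ⟪x + y, v⟫_ℂ = 0
        rw [inner_add_left, ihx, ihy, add_zero]
      | smul a x hx ihx =>
        show ⟪a • x, v⟫_ℂ = 0
        rw [inner_smul_left, ihx, mul_zero]
    have hclosed : IsClosed {u : H | ⟪u, v⟫_ℂ = 0} :=
      isClosed_eq (Continuous.inner continuous_id continuous_const) continuous_const
    have hmem : u ∈ closure (Submodule.span ℂ (e '' {β | equivTail β α}) : Set H) := by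
      rw [(dense_iff_closure_eq).mp (dense_span_e he)]; trivial
    exact closure_minimal hsub hclosed hmem
  have := hall v
  rwa [inner_self_eq_zero] at this

end Irred

section Irred2

open Filter ContinuousLinearMap Topology

variable {d : ℕ}

/-- The sequence of infinite multiindices obtained from `γ` by successively erasing the
first occurrences of `α 0`, `α 1`, …. -/
noncomputable def deltaSeq (α γ : ℕ → Fin d) : ℕ → ℕ → Fin d
  | 0 => γ
  | n + 1 => eraseInf (α n) (deltaSeq α γ n)

/-- The scalar picked up after `n` erasure steps. -/
noncomputable def cSeq (q : Fin d → Fin d → ℂ) (α γ : ℕ → Fin d) (n : ℕ) : ℂ :=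
  ∏ m ∈ Finset.range n, qOneInf q (α m) (deltaSeq α γ m)

lemma cSeq_succ (q : Fin d → Fin d → ℂ) (α γ : ℕ → Fin d) (n : ℕ) :
    cSeq q α γ (n + 1) = cSeq q α γ n * qOneInf q (α n) (deltaSeq α γ n) :=
  Finset.prod_range_succ _ n

variable {H : Type*} [NormedAddCommGroup H] [InnerProductSpace ℂ H] [CompleteSpace H]
variable {q : Fin d → Fin d → ℂ} {α : ℕ → Fin d} {e : (ℕ → Fin d) → H} {S : Fin d → H →L[ℂ] H}

lemma keyA (hlt : ∀ i j : Fin d, i ≠ j → ‖q i j‖ < 1)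
    (he : IsRepSpace q α e) (hS : IsRepOps q α e S)
    {γ : ℕ → Fin d} (hγ : equivTail γ α) :
    Filter.Tendsto
      (fun n => sWord S (prefixList α n)
        (ContinuousLinearMap.adjoint (sWord S (prefixList α n)) (e γ)))
      Filter.atTop (𝓝 (⟪e α, e γ⟫_ℂ • e α)) := by
  classical
  have hΔE : ∀ n, equivTail (deltaSeq α γ n) α := by
    intro n; induction n with
    | zero => exact hγ
    | succ n ih => exact equivTail_eraseInf _ ih
  have hx : ∀ n, ContinuousLinearMap.adjoint (sWord S (prefixList α n)) (e γ)
      = cSeq q α γ n • e (deltaSeq α γ n) := by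
    intro n; induction n with
    | zero =>
      have h1 : prefixList α 0 = ([] : List (Fin d)) := by rw [prefixList, List.ofFn_zero]
      rw [h1, sWord_nil, ContinuousLinearMap.one_def, ContinuousLinearMap.adjoint_id]
      show e γ = cSeq q α γ 0 • e (deltaSeq α γ 0)
      rw [show cSeq q α γ 0 = 1 from Finset.prod_range_zero _, one_smul]
      rfl
    | succ n ih =>
      rw [sWord_prefix_split, ContinuousLinearMap.adjoint_comp,
        ContinuousLinearMap.comp_apply, ih, map_smul]
      by_cases hex : ∃ k, deltaSeq α γ n k = α n
      · rw [hS.2.2 (α n) (deltaSeq α γ n) (hΔE n) hex, smul_smul, ← cSeq_succ]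
        rfl
      · rw [hS.2.1 (α n) (deltaSeq α γ n) (hΔE n) hex, smul_zero]
        have hq0 : qOneInf q (α n) (deltaSeq α γ n) = 0 := by rw [qOneInf, dif_neg hex]
        rw [cSeq_succ, hq0, mul_zero, zero_smul]
  have hanti : ∀ m n : ℕ, m ≤ n →
      ‖cSeq q α γ n‖ ≤ ‖cSeq q α γ m‖ := by
    intro m n hmn
    induction n, hmn using Nat.le_induction with
    | base => exact le_refl _
    | succ n hmn ih =>
      rw [cSeq_succ, norm_mul]
      calc ‖cSeq q α γ n‖ * ‖qOneInf q (α n) (deltaSeq α γ n)‖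
          ≤ ‖cSeq q α γ n‖ * 1 :=
            mul_le_mul_of_nonneg_left (qOneInf_abs_le_one q hlt _ _) (norm_nonneg _)
        _ = ‖cSeq q α γ n‖ := mul_one _
        _ ≤ _ := ih
  have htn : ∀ n, ⟪e α, e γ⟫_ℂ
      = cSeq q α γ n * ⟪e (shift^[n] α), e (deltaSeq α γ n)⟫_ℂ := by
    intro n
    calc ⟪e α, e γ⟫_ℂ
        = ⟪sWord S (prefixList α n) (e (shift^[n] α)), e γ⟫_ℂ := by
          rw [sWord_prefix_e hS (equivTail_refl α) n]
      _ = ⟪e (shift^[n] α),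
            ContinuousLinearMap.adjoint (sWord S (prefixList α n)) (e γ)⟫_ℂ :=
          (ContinuousLinearMap.adjoint_inner_right _ _ _).symm
      _ = ⟪e (shift^[n] α), cSeq q α γ n • e (deltaSeq α γ n)⟫_ℂ := by rw [hx n]
      _ = cSeq q α γ n * ⟪e (shift^[n] α), e (deltaSeq α γ n)⟫_ℂ := inner_smul_right _ _ _
  have hinner1 : ∀ n, ‖⟪e (shift^[n] α), e (deltaSeq α γ n)⟫_ℂ‖ ≤ 1 := by
    intro n
    have h := norm_inner_le_norm (𝕜 := ℂ) (e (shift^[n] α)) (e (deltaSeq α γ n))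
    rw [norm_e he (equivTail_shift_self α n), norm_e he (hΔE n), mul_one] at h
    exact h
  by_cases hcase : ∀ N, ∃ n, N ≤ n ∧ deltaSeq α γ n 0 ≠ α n
  · -- infinitely many nontrivial erasure steps: everything tends to `0`
    have hne : (Finset.univ : Finset (Fin d × Fin d)).Nonempty :=
      ⟨(α 0, α 0), Finset.mem_univ _⟩
    set f : Fin d × Fin d → ℝ := fun p => if p.1 = p.2 then 0 else ‖q p.1 p.2‖
      with hf
    set ρ : ℝ := Finset.univ.sup' hne f with hρ
    have hρ0 : 0 ≤ ρ := by
      have h := Finset.le_sup' f (Finset.mem_univ (α 0, α 0))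
      rw [hf] at h; dsimp only at h; rw [if_pos rfl] at h
      exact h
    have hρ1 : ρ < 1 := by
      rw [hρ, Finset.sup'_lt_iff]
      rintro ⟨i, j⟩ _
      rw [hf]; dsimp only
      split_ifs with hij
      · exact one_pos
      · exact hlt i j hij
    have hρq : ∀ i j : Fin d, i ≠ j → ‖q i j‖ ≤ ρ := by
      intro i j hij
      have h := Finset.le_sup' f (Finset.mem_univ (i, j))
      rw [hf] at h; dsimp only at h; rw [if_neg hij] at h
      exact h
    have hkey : ∀ k : ℕ, ∃ n, ‖cSeq q α γ n‖ ≤ ρ ^ k := by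
      intro k; induction k with
      | zero => exact ⟨0, by simp [cSeq]⟩
      | succ k ihk =>
        obtain ⟨n, hn⟩ := ihk
        obtain ⟨m, hm, hm0⟩ := hcase n
        refine ⟨m + 1, ?_⟩
        rw [cSeq_succ, norm_mul]
        calc ‖cSeq q α γ m‖ * ‖qOneInf q (α m) (deltaSeq α γ m)‖
            ≤ ρ ^ k * ρ :=
              mul_le_mul (le_trans (hanti n m hm) hn)
                (qOneInf_abs_le_rho q hlt ρ hρ0 hρq hm0) (norm_nonneg _)
                (pow_nonneg hρ0 k)
          _ = ρ ^ (k + 1) := (pow_succ ρ k).symm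
    have hc0 : Filter.Tendsto (fun n => ‖cSeq q α γ n‖) Filter.atTop (𝓝 0) := by
      refine Metric.tendsto_atTop.mpr fun ε hε => ?_
      obtain ⟨k, hk⟩ := exists_pow_lt_of_lt_one hε hρ1
      obtain ⟨n0, hn0⟩ := hkey k
      refine ⟨n0, fun n hn => ?_⟩
      rw [Real.dist_eq, sub_zero, abs_of_nonneg (norm_nonneg _)]
      exact lt_of_le_of_lt (le_trans (hanti n0 n hn) hn0) hk
    have ht0 : ⟪e α, e γ⟫_ℂ = 0 := by
      have hb : ∀ n, ‖⟪e α, e γ⟫_ℂ‖ ≤ ‖cSeq q α γ n‖ := by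
        intro n
        rw [htn n, norm_mul]
        calc ‖cSeq q α γ n‖
              * ‖⟪e (shift^[n] α), e (deltaSeq α γ n)⟫_ℂ‖
            ≤ ‖cSeq q α γ n‖ * 1 :=
              mul_le_mul_of_nonneg_left (hinner1 n) (norm_nonneg _)
          _ = _ := mul_one _
      have h1 : ‖⟪e α, e γ⟫_ℂ‖ ≤ 0 :=
        ge_of_tendsto hc0 (Filter.Eventually.of_forall hb)
      exact norm_eq_zero.mp (le_antisymm h1 (norm_nonneg _))
    rw [ht0, zero_smul]
    refine squeeze_zero_norm (fun n => le_of_eq ?_) hc0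
    rw [hx n, map_smul, norm_smul,
      sWord_apply_e hS (hΔE n), norm_e he (equivTail_foldr (hΔE n) _), mul_one]
  · -- eventually only trivial erasure steps
    push_neg at hcase
    obtain ⟨N, hN⟩ := hcase
    have hstep : ∀ n, N ≤ n → deltaSeq α γ (n + 1) = shift (deltaSeq α γ n) := by
      intro n hn
      show eraseInf (α n) (deltaSeq α γ n) = _
      exact eraseInf_of_head (hN n hn)
    have hiter : ∀ j : ℕ, deltaSeq α γ (N + j) = shift^[j] (deltaSeq α γ N) := by
      intro j; induction j with
      | zero => rfl
      | succ j ih =>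
        have h0 : N + (j + 1) = (N + j) + 1 := rfl
        rw [h0, hstep (N + j) (Nat.le_add_right N j), ih]
        exact (Function.iterate_succ_apply' shift j _).symm
    have hΔN : deltaSeq α γ N = shift^[N] α := by
      funext k
      have h1 : deltaSeq α γ N k = deltaSeq α γ (N + k) 0 := by
        rw [hiter k, shift_iterate_apply, Nat.zero_add]
      rw [h1, hN (N + k) (Nat.le_add_right N k), shift_iterate_apply]
      congr 1
      omega
    have hΔn : ∀ n, N ≤ n → deltaSeq α γ n = shift^[n] α := by
      intro n hn
      obtain ⟨j, rfl⟩ := Nat.exists_eq_add_of_le hn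
      rw [hiter j, hΔN, ← Function.iterate_add_apply]
      congr 1
      omega
    have hcN : ∀ n, N ≤ n → cSeq q α γ n = cSeq q α γ N := by
      intro n hn
      induction n, hn using Nat.le_induction with
      | base => rfl
      | succ n hn ih => rw [cSeq_succ, qOneInf_of_head q (hN n hn), mul_one, ih]
    have htN : ⟪e α, e γ⟫_ℂ = cSeq q α γ N := by
      rw [htn N, hΔN, inner_e_self he (equivTail_shift_self α N), mul_one]
    rw [htN]
    refine tendsto_atTop_of_eventually_const (i₀ := N) fun n hn => ?_
    rw [hx n, map_smul, hΔn n hn, sWord_prefix_e hS (equivTail_refl α) n, hcN n hn]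

lemma keyB (hlt : ∀ i j : Fin d, i ≠ j → ‖q i j‖ < 1)
    (he : IsRepSpace q α e) (hS : IsRepOps q α e S)
    (T : H →L[ℂ] H)
    (hT : ∀ j : Fin d, T ∘L S j = S j ∘L T)
    (hT' : ∀ j : Fin d, T ∘L ContinuousLinearMap.adjoint (S j)
      = ContinuousLinearMap.adjoint (S j) ∘L T)
    {γ : ℕ → Fin d} (hγ : equivTail γ α) :
    ⟪e α, T (e γ)⟫_ℂ = ⟪e α, e γ⟫_ℂ * ⟪e α, T (e α)⟫_ℂ := by
  have hPα : ∀ n, sWord S (prefixList α n)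
      (ContinuousLinearMap.adjoint (sWord S (prefixList α n)) (e α)) = e α := fun n => by
    rw [Wadj_prefix hS n, sWord_prefix_e hS (equivTail_refl α) n]
  have hconst : ∀ n, ⟪e α, T (e γ)⟫_ℂ
      = ⟪e α, T (sWord S (prefixList α n)
          (ContinuousLinearMap.adjoint (sWord S (prefixList α n)) (e γ)))⟫_ℂ := by
    intro n
    calc ⟪e α, T (e γ)⟫_ℂ
        = ⟪sWord S (prefixList α n)
            (ContinuousLinearMap.adjoint (sWord S (prefixList α n)) (e α)), T (e γ)⟫_ℂ := by
          rw [hPα n]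
      _ = ⟪ContinuousLinearMap.adjoint (sWord S (prefixList α n)) (e α),
            ContinuousLinearMap.adjoint (sWord S (prefixList α n)) (T (e γ))⟫_ℂ :=
          (ContinuousLinearMap.adjoint_inner_right _ _ _).symm
      _ = ⟪ContinuousLinearMap.adjoint (sWord S (prefixList α n)) (e α),
            T (ContinuousLinearMap.adjoint (sWord S (prefixList α n)) (e γ))⟫_ℂ := by
          rw [← commAdj_sWord_apply hT']
      _ = ⟪e α, sWord S (prefixList α n)
            (T (ContinuousLinearMap.adjoint (sWord S (prefixList α n)) (e γ)))⟫_ℂ :=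
          ContinuousLinearMap.adjoint_inner_left _ _ _
      _ = _ := by rw [← comm_sWord_apply hT]
  have hlim := keyA hlt he hS hγ
  have hlim2 : Filter.Tendsto (fun n => ⟪e α, T (sWord S (prefixList α n)
      (ContinuousLinearMap.adjoint (sWord S (prefixList α n)) (e γ)))⟫_ℂ) Filter.atTop
      (𝓝 ⟪e α, T (⟪e α, e γ⟫_ℂ • e α)⟫_ℂ) :=
    Filter.Tendsto.inner tendsto_const_nhds
      (Filter.Tendsto.comp (T.continuous.tendsto _) hlim)
  simp only [← hconst] at hlim2
  have h := tendsto_nhds_unique tendsto_const_nhds hlim2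
  rwa [map_smul, inner_smul_right] at h

lemma eq_on_dense (he : IsRepSpace q α e) (T T' : H →L[ℂ] H)
    (h : ∀ γ : ℕ → Fin d, equivTail γ α → T (e γ) = T' (e γ)) : T = T' := by
  refine ContinuousLinearMap.ext_on (dense_span_e he) ?_
  rintro x ⟨γ, hγ, rfl⟩
  exact h γ hγ

end Irred2

theorem statement9 {d : ℕ} (hd : 2 ≤ d) (q : Fin d → Fin d → ℂ)
    (hsym : ∀ i j : Fin d, i ≠ j → q i j = (starRingEnd ℂ) (q j i))
    (hlt : ∀ i j : Fin d, i ≠ j → ‖q i j‖ < 1)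
    (α : ℕ → Fin d) (e : (ℕ → Fin d) → H) (S : Fin d → H →L[ℂ] H)
    (he : IsRepSpace q α e) (hS : IsRepOps q α e S)
    (C : H →L[ℂ] H)
    (hC : ∀ j : Fin d, C ∘L S j = S j ∘L C)
    (hC' : ∀ j : Fin d, C ∘L ContinuousLinearMap.adjoint (S j)
      = ContinuousLinearMap.adjoint (S j) ∘L C) :
    ∃ c : ℂ, C = c • (1 : H →L[ℂ] H) := by
  classical
  set lam : ℂ := ⟪e α, C (e α)⟫_ℂ with hlam
  have hCadjS : ∀ j : Fin d, ContinuousLinearMap.adjoint C ∘L S j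
      = S j ∘L ContinuousLinearMap.adjoint C := by
    intro j
    have h := congrArg ContinuousLinearMap.adjoint (hC' j)
    rw [ContinuousLinearMap.adjoint_comp, ContinuousLinearMap.adjoint_comp,
      ContinuousLinearMap.adjoint_adjoint] at h
    exact h.symm
  have hCadjSadj : ∀ j : Fin d, ContinuousLinearMap.adjoint C ∘L ContinuousLinearMap.adjoint (S j)
      = ContinuousLinearMap.adjoint (S j) ∘L ContinuousLinearMap.adjoint C := by
    intro j
    have h := congrArg ContinuousLinearMap.adjoint (hC j)
    rw [ContinuousLinearMap.adjoint_comp, ContinuousLinearMap.adjoint_comp] at h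
    exact h.symm
  have hCeα : C (e α) = lam • e α := by
    have hperp : ∀ γ : ℕ → Fin d, equivTail γ α → ⟪e γ, C (e α) - lam • e α⟫_ℂ = 0 := by
      intro γ hγ
      rw [inner_sub_right, inner_smul_right]
      have h2 := keyB hlt he hS (ContinuousLinearMap.adjoint C) hCadjS hCadjSadj hγ
      have h3 : ⟪e α, ContinuousLinearMap.adjoint C (e γ)⟫_ℂ = ⟪C (e α), e γ⟫_ℂ :=
        ContinuousLinearMap.adjoint_inner_right _ _ _
      have h4 : ⟪e α, ContinuousLinearMap.adjoint C (e α)⟫_ℂ = ⟪C (e α), e α⟫_ℂ :=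
        ContinuousLinearMap.adjoint_inner_right _ _ _
      have h5 : ⟪e γ, C (e α)⟫_ℂ = ⟪e γ, e α⟫_ℂ * lam := by
        calc ⟪e γ, C (e α)⟫_ℂ
            = (starRingEnd ℂ) ⟪C (e α), e γ⟫_ℂ := (inner_conj_symm _ _).symm
          _ = (starRingEnd ℂ) (⟪e α, e γ⟫_ℂ * ⟪C (e α), e α⟫_ℂ) := by rw [← h3, h2, h4]
          _ = ⟪e γ, e α⟫_ℂ * lam := by
              rw [map_mul, inner_conj_symm, inner_conj_symm, hlam]
      rw [h5]; ring
    have h0 := orth_dense he _ hperp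
    rwa [sub_eq_zero] at h0
  have hCeγ : ∀ γ : ℕ → Fin d, equivTail γ α → C (e γ) = lam • e γ := by
    intro γ hγ
    obtain ⟨m, n, hmn⟩ := hγ
    have h1 : e γ = sWord S (prefixList γ m)
        (ContinuousLinearMap.adjoint (sWord S (prefixList α n)) (e α)) := by
      rw [Wadj_prefix hS n, ← hmn, sWord_prefix_e hS ⟨m, n, hmn⟩ m]
    rw [h1, comm_sWord_apply hC, commAdj_sWord_apply hC', hCeα, map_smul, map_smul, ← h1]
  refine ⟨lam, eq_on_dense he C (lam • (1 : H →L[ℂ] H)) fun γ hγ => ?_⟩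
  rw [hCeγ γ hγ]
  simp

end QCstar
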